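/- arXiv:2307.13194 — 3 statements merged into one kernel-verified Lean document; each statement's English description precedes it below -/
import Mathlib

section
/- Let q be a positive integer and let m, n be integers with gcd(mn, q) = 1. Then (i) Σ*_{χ mod q} χ(m) χ̄(n) = Σ_{q = d·r, r | (m−n)} μ(d) φ(r), where Σ* denotes the sum over primitive characters mod q; and (ii) Σ^♭_{χ mod q} χ(m) χ̄(n) = (1/2) [ Σ_{q = d·r, r | (m−n)} μ(d) φ(r) + Σ_{q = d·r, r | (m+n)} μ(d) φ(r) ], where Σ^♭ denotes the sum over primitive even characters mod q. -/
open Complex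
open scoped Classical

noncomputable section

private lemma isUnit_intCast_of_gcd {r : ℕ} {b : ℤ} (hb : Int.gcd b r = 1) :
    IsUnit ((b : ZMod r)) := by
  refine IsUnit.of_mul_eq_one ((Int.gcdA b r : ZMod r)) ?_
  have h2 : ((b * Int.gcdA b r + r * Int.gcdB b r : ℤ) : ZMod r) = ((1 : ℤ) : ZMod r) := by
    rw [← Int.gcd_eq_gcd_ab, hb]; norm_num
  push_cast at h2
  simpa [ZMod.natCast_self] using h2

private lemma conj_char_apply {r : ℕ} (χ : DirichletCharacter ℂ r) {b : ZMod r} (hb : IsUnit b) :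
    (starRingEnd ℂ) (χ b) = χ b⁻¹ := by
  have h1 : χ b * χ b⁻¹ = 1 := by
    rw [← map_mul, ZMod.mul_inv_of_unit b hb, map_one]
  have h2 : χ b * (starRingEnd ℂ) (χ b) = 1 := by
    have hn := χ.unit_norm_eq_one hb.unit
    rw [IsUnit.unit_spec] at hn
    rw [Complex.mul_conj]
    rw [Complex.normSq_eq_norm_sq]
    norm_cast
    rw [hn]; norm_num
  calc (starRingEnd ℂ) (χ b) = (starRingEnd ℂ) (χ b) * (χ b * χ b⁻¹) := by rw [h1, mul_one]
    _ = (χ b * (starRingEnd ℂ) (χ b)) * χ b⁻¹ := by ring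
    _ = χ b⁻¹ := by rw [h2, one_mul]

private lemma sum_all_chars {r : ℕ} [NeZero r] (m n : ℤ) (hm : IsUnit ((m : ZMod r)))
    (hn : IsUnit ((n : ZMod r))) :
    ∑ χ : DirichletCharacter ℂ r, χ ((m : ZMod r)) * (starRingEnd ℂ) (χ ((n : ZMod r))) =
      if (r : ℤ) ∣ (m - n) then (r.totient : ℂ) else 0 := by
  have key := DirichletCharacter.sum_char_inv_mul_char_eq ℂ hn ((m : ZMod r))
  have h1 : ∀ χ : DirichletCharacter ℂ r,
      χ ((m : ZMod r)) * (starRingEnd ℂ) (χ ((n : ZMod r))) =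
      χ ((n : ZMod r))⁻¹ * χ ((m : ZMod r)) := by
    intro χ; rw [conj_char_apply χ hn, mul_comm]
  simp only [h1]
  rw [key]
  have : ((n : ZMod r) = (m : ZMod r)) ↔ ((r : ℤ) ∣ (m - n)) := by
    rw [ZMod.intCast_eq_intCast_iff, Int.modEq_iff_dvd]
  simp only [this]

private lemma exists_decomp {q d e : ℕ} [NeZero q] (hd : d ∣ q) (he : e ∣ q) (x : (ZMod q)ˣ)
    (hx : ZMod.unitsMap ((Nat.gcd_dvd_left d e).trans hd) x = 1) :
    ∃ u v : (ZMod q)ˣ, x = u * v ∧ ZMod.unitsMap he u = 1 ∧ ZMod.unitsMap hd v = 1 := by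
  have hq0 : q ≠ 0 := NeZero.ne q
  set g : ℕ := Nat.gcd d e with hgdef
  set a : ℤ := (((x : ZMod q).val : ℕ) : ℤ) with hadef
  have ha : ((a : ℤ) : ZMod q) = (x : ZMod q) := by simp [hadef]
  have haq : Nat.Coprime a.natAbs q := by
    rw [hadef, Int.natAbs_natCast]; exact ZMod.val_coe_unit_coprime x
  -- g ∣ a - 1
  have hga : (g : ℤ) ∣ a - 1 := by
    have h1 : ((a : ℤ) : ZMod g) = 1 := by
      have h2 := congrArg (fun z : (ZMod g)ˣ => (z : ZMod g)) hx
      simp only [ZMod.unitsMap_def, Units.coe_map, Units.val_one, MonoidHom.coe_coe] at h2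
      calc ((a : ℤ) : ZMod g) = ZMod.castHom ((Nat.gcd_dvd_left d e).trans hd) (ZMod g)
            (((a : ℤ) : ZMod q)) := by rw [map_intCast]
        _ = 1 := by rw [ha]; exact h2
    have h3 : ((a - 1 : ℤ) : ZMod g) = 0 := by push_cast [h1]; ring
    exact (ZMod.intCast_zmod_eq_zero_iff_dvd _ _).mp h3
  obtain ⟨k, hk⟩ := hga
  set s : ℤ := Int.gcdA d e with hsdef
  set t : ℤ := Int.gcdB d e with htdef
  have hbez : (g : ℤ) = d * s + e * t := by
    have h4 := Int.gcd_eq_gcd_ab (d : ℤ) (e : ℤ)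
    rw [Int.gcd_natCast_natCast] at h4
    exact h4
  set b : ℤ := 1 + k * (e * t) with hbdef
  have hdab : (d : ℤ) ∣ a - b := ⟨k * s, by rw [hbdef]; linear_combination hk + k * hbez⟩
  have heb1 : (e : ℤ) ∣ b - 1 := ⟨k * t, by rw [hbdef]; ring⟩
  -- L = lcm d e
  set L : ℕ := Nat.lcm d e with hLdef
  have hL : L ∣ q := Nat.lcm_dvd hd he
  have hL0 : NeZero L := ⟨fun h0 => hq0 (Nat.eq_zero_of_zero_dvd (h0 ▸ hL))⟩
  -- b is a unit mod L
  have hbL : Int.gcd b L = 1 := by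
    rw [Nat.eq_one_iff_not_exists_prime_dvd]
    intro p hp hpdvd
    have hpb : p ∣ b.natAbs := hpdvd.trans (Nat.gcd_dvd_left _ _)
    have hpL : p ∣ L := by
      have := hpdvd.trans (Nat.gcd_dvd_right _ _)
      simpa using this
    have hpde : p ∣ d ∨ p ∣ e := (Nat.Prime.dvd_mul hp).mp (hpL.trans (Nat.lcm_dvd_mul d e))
    rcases hpde with hpd | hpe
    · -- p ∣ d, p ∣ b, d ∣ a - b → p ∣ a; p ∣ q contradicts coprimality of a, q
      have hpa : (p : ℤ) ∣ a := by
        have h5 : (p : ℤ) ∣ a - b := (Int.natCast_dvd_natCast.mpr hpd).trans hdab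
        have h6 : (p : ℤ) ∣ b := Int.natCast_dvd.mpr hpb
        have := dvd_add h5 h6
        simpa using this
      have hpq : p ∣ q := hpd.trans hd
      have : p ∣ Nat.gcd a.natAbs q := Nat.dvd_gcd (Int.natCast_dvd.mp hpa) hpq
      rw [haq] at this
      exact hp.one_lt.ne' (Nat.dvd_one.mp this)
    · -- p ∣ e, p ∣ b, e ∣ b - 1 → p ∣ 1
      have h5 : (p : ℤ) ∣ b - 1 := (Int.natCast_dvd_natCast.mpr hpe).trans heb1
      have h6 : (p : ℤ) ∣ b := Int.natCast_dvd.mpr hpb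
      have h7 : (p : ℤ) ∣ 1 := by
        have := dvd_sub h6 h5
        simpa using this
      exact hp.one_lt.ne' (Nat.dvd_one.mp (Int.natCast_dvd_natCast.mp (by simpa using h7)))
  have hbLunit : IsUnit ((b : ZMod L)) := by
    refine IsUnit.of_mul_eq_one ((Int.gcdA b L : ZMod L)) ?_
    have h2 : ((b * Int.gcdA b L + L * Int.gcdB b L : ℤ) : ZMod L) = ((1 : ℤ) : ZMod L) := by
      rw [← Int.gcd_eq_gcd_ab, hbL]; norm_num
    push_cast at h2
    simpa [ZMod.natCast_self] using h2
  obtain ⟨u, hu⟩ := ZMod.unitsMap_surjective hL hbLunit.unit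
  -- u cast down to ZMod L is b
  have huL : ZMod.castHom hL (ZMod L) ((u : ZMod q)) = ((b : ZMod L)) := by
    have := congrArg (fun z : (ZMod L)ˣ => (z : ZMod L)) hu
    simp only [ZMod.unitsMap_def, Units.coe_map, MonoidHom.coe_coe] at this
    rw [this, IsUnit.unit_spec]
  -- unitsMap he u = 1
  have hue' : ZMod.castHom he (ZMod e) ((u : ZMod q)) = 1 := by
    have h8 : ZMod.castHom he (ZMod e) ((u : ZMod q))
        = ZMod.castHom (Nat.dvd_lcm_right d e) (ZMod e) (ZMod.castHom hL (ZMod L) (u : ZMod q)) := by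
      rw [← RingHom.comp_apply, ZMod.castHom_comp]
    have hb1e : ((b : ℤ) : ZMod e) = ((1 : ℤ) : ZMod e) := by
      rw [ZMod.intCast_eq_intCast_iff, Int.modEq_iff_dvd]
      have := dvd_neg.mpr heb1
      rwa [neg_sub] at this
    rw [h8, huL]
    calc (ZMod.castHom (Nat.dvd_lcm_right d e) (ZMod e)) ((b : ZMod L))
        = ((b : ℤ) : ZMod e) := map_intCast _ _
      _ = 1 := by rw [hb1e]; norm_num
  have hue : ZMod.unitsMap he u = 1 := by
    ext1
    simpa [ZMod.unitsMap_def] using hue'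
  -- unitsMap hd (u⁻¹ * x) = 1
  refine ⟨u, u⁻¹ * x, by group, hue, ?_⟩
  have hud : ZMod.unitsMap hd u = ZMod.unitsMap hd x := by
    ext1
    simp only [ZMod.unitsMap_def, Units.coe_map, MonoidHom.coe_coe]
    have hbad : ((b : ℤ) : ZMod d) = ((a : ℤ) : ZMod d) := by
      rw [ZMod.intCast_eq_intCast_iff, Int.modEq_iff_dvd]
      exact hdab
    have h8 : ZMod.castHom hd (ZMod d) ((u : ZMod q))
        = ZMod.castHom (Nat.dvd_lcm_left d e) (ZMod d) (ZMod.castHom hL (ZMod L) (u : ZMod q)) := by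
      rw [← RingHom.comp_apply, ZMod.castHom_comp]
    rw [h8, huL]
    calc (ZMod.castHom (Nat.dvd_lcm_left d e) (ZMod d)) ((b : ZMod L))
        = ((b : ℤ) : ZMod d) := map_intCast _ _
      _ = ((a : ℤ) : ZMod d) := hbad
      _ = ZMod.castHom hd (ZMod d) (((a : ℤ) : ZMod q)) := (map_intCast _ _).symm
      _ = ZMod.castHom hd (ZMod d) ((x : ZMod q)) := by rw [ha]
  rw [map_mul, map_inv, hud]
  group

private lemma factorsThrough_gcd {q : ℕ} [NeZero q] (χ : DirichletCharacter ℂ q) {d e : ℕ}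
    (hd : χ.FactorsThrough d) (he : χ.FactorsThrough e) :
    χ.FactorsThrough (Nat.gcd d e) := by
  have hdq := hd.dvd
  have heq := he.dvd
  rw [DirichletCharacter.factorsThrough_iff_ker_unitsMap ((Nat.gcd_dvd_left d e).trans hdq)]
  rw [DirichletCharacter.factorsThrough_iff_ker_unitsMap hdq] at hd
  rw [DirichletCharacter.factorsThrough_iff_ker_unitsMap heq] at he
  intro x hx
  obtain ⟨u, v, rfl, hu, hv⟩ := exists_decomp hdq heq x hx
  have h1 : χ.toUnitHom u = 1 := he (by rwa [MonoidHom.mem_ker])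
  have h2 : χ.toUnitHom v = 1 := hd (by rwa [MonoidHom.mem_ker])
  rw [MonoidHom.mem_ker, map_mul, h1, h2, mul_one]

private lemma conductor_dvd_of_factorsThrough {q : ℕ} [NeZero q] {χ : DirichletCharacter ℂ q}
    {d : ℕ} (hd : χ.FactorsThrough d) : χ.conductor ∣ d := by
  set g := Nat.gcd d χ.conductor with hg
  have hgft : χ.FactorsThrough g := factorsThrough_gcd χ hd χ.factorsThrough_conductor
  have h1 : χ.conductor ≤ g := Nat.sInf_le hgft
  have h2 : g ∣ χ.conductor := Nat.gcd_dvd_right _ _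
  have hc0 : χ.conductor ≠ 0 := χ.conductor_ne_zero
  have hg0 : 0 < g := Nat.pos_of_ne_zero (fun h0 => hc0 (Nat.eq_zero_of_zero_dvd (h0 ▸ h2)))
  have h2' : g ≤ χ.conductor := Nat.le_of_dvd (Nat.pos_of_ne_zero hc0) h2
  have h3 : g = χ.conductor := le_antisymm h2' h1
  exact h3 ▸ Nat.gcd_dvd_left _ _

private lemma factorsThrough_iff_conductor_dvd {q : ℕ} [NeZero q] {χ : DirichletCharacter ℂ q}
    {d : ℕ} (hdq : d ∣ q) : χ.FactorsThrough d ↔ χ.conductor ∣ d := by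
  refine ⟨conductor_dvd_of_factorsThrough, fun h => ?_⟩
  obtain ⟨h', χ₀, hχ₀⟩ := χ.factorsThrough_conductor
  exact ⟨hdq, DirichletCharacter.changeLevel h χ₀, by
    rw [← DirichletCharacter.changeLevel_trans χ₀ h hdq]; exact hχ₀⟩

private lemma sum_moebius_divisors (N : ℕ) :
    (∑ e ∈ N.divisors, (ArithmeticFunction.moebius e : ℤ)) = if N = 1 then 1 else 0 := by
  have h1 : ((ArithmeticFunction.moebius * ArithmeticFunction.zeta : ArithmeticFunction ℤ)) N
      = ∑ e ∈ N.divisors, (ArithmeticFunction.moebius e : ℤ) := by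
    rw [ArithmeticFunction.coe_mul_zeta_apply]
  rw [← h1, ArithmeticFunction.moebius_mul_coe_zeta, ArithmeticFunction.one_apply]

private lemma moebius_indicator {q c : ℕ} (hq : q ≠ 0) (hc : c ∣ q) :
    (∑ d ∈ q.divisors, if c ∣ d then ((ArithmeticFunction.moebius (q / d) : ℤ) : ℂ) else 0)
      = if c = q then 1 else 0 := by
  have hc0 : c ≠ 0 := fun h => hq (Nat.eq_zero_of_zero_dvd (h ▸ hc))
  have hcpos : 0 < c := Nat.pos_of_ne_zero hc0
  have hqc0 : q / c ≠ 0 := Nat.div_ne_zero_iff.mpr ⟨hc0, Nat.le_of_dvd (Nat.pos_of_ne_zero hq) hc⟩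
  have key : (∑ d ∈ q.divisors, if c ∣ d then (ArithmeticFunction.moebius (q / d) : ℤ) else 0)
      = if c = q then 1 else 0 := by
    rw [← Finset.sum_filter]
    have h2 : ∑ d ∈ q.divisors.filter (fun d => c ∣ d), (ArithmeticFunction.moebius (q / d) : ℤ)
        = ∑ e ∈ (q / c).divisors, (ArithmeticFunction.moebius ((q / c) / e) : ℤ) := by
      refine Finset.sum_nbij' (fun d => d / c) (fun e => c * e) ?_ ?_ ?_ ?_ ?_
      · intro d hd
        simp only [Finset.mem_filter, Nat.mem_divisors] at hd ⊢
        obtain ⟨⟨hdq, _⟩, D, rfl⟩ := hd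
        rw [Nat.mul_div_cancel_left _ hcpos]
        exact ⟨(Nat.dvd_div_iff_mul_dvd hc).mpr hdq, hqc0⟩
      · intro e he
        simp only [Finset.mem_filter, Nat.mem_divisors] at he ⊢
        exact ⟨⟨(Nat.dvd_div_iff_mul_dvd hc).mp he.1, hq⟩, Dvd.intro e rfl⟩
      · intro d hd
        simp only [Finset.mem_filter] at hd
        exact Nat.mul_div_cancel' hd.2
      · intro e _
        exact Nat.mul_div_cancel_left _ hcpos
      · intro d hd
        simp only [Finset.mem_filter, Nat.mem_divisors] at hd
        obtain ⟨⟨hdq, _⟩, D, rfl⟩ := hd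
        rw [Nat.mul_div_cancel_left _ hcpos, Nat.div_div_eq_div_mul]
    rw [h2, Nat.sum_div_divisors, sum_moebius_divisors]
    have h3 : q / c = 1 ↔ c = q := by
      constructor
      · intro h1
        have h4 := Nat.div_mul_cancel hc
        rw [h1, one_mul] at h4
        exact h4
      · intro h1; subst h1; exact Nat.div_self (Nat.pos_of_ne_zero hq)
    simp [h3]
  calc (∑ d ∈ q.divisors, if c ∣ d then ((ArithmeticFunction.moebius (q / d) : ℤ) : ℂ) else 0)
      = ((∑ d ∈ q.divisors, if c ∣ d then (ArithmeticFunction.moebius (q / d) : ℤ) else 0 : ℤ) : ℂ) := by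
        push_cast
        apply Finset.sum_congr rfl
        intro d _
        split <;> simp
    _ = if c = q then 1 else 0 := by rw [key]; split <;> simp

private lemma changeLevel_apply_intCast {q d : ℕ} (hd : d ∣ q)
    (ψ : DirichletCharacter ℂ d) (m : ℤ) (hm : IsUnit ((m : ZMod q))) :
    (DirichletCharacter.changeLevel hd ψ) ((m : ZMod q)) = ψ ((m : ZMod d)) := by
  have h1 := DirichletCharacter.changeLevel_eq_cast_of_dvd ψ hd hm.unit
  rw [IsUnit.unit_spec] at h1
  rw [h1]
  congr 1
  rw [← ZMod.castHom_apply (h := hd), map_intCast]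

private lemma isUnit_cast_down {q d : ℕ} (hd : d ∣ q) (m : ℤ) (hm : IsUnit ((m : ZMod q))) :
    IsUnit ((m : ZMod d)) := by
  have := hm.map (ZMod.castHom hd (ZMod d))
  rwa [map_intCast] at this

private lemma sum_factorsThrough {q d : ℕ} [NeZero q] (hd : d ∣ q) (m n : ℤ)
    (hm : IsUnit ((m : ZMod q))) (hn : IsUnit ((n : ZMod q))) :
    (∑ χ : DirichletCharacter ℂ q, if χ.FactorsThrough d then
        χ ((m : ZMod q)) * (starRingEnd ℂ) (χ ((n : ZMod q))) else 0)
      = ∑ ψ : DirichletCharacter ℂ d,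
          ψ ((m : ZMod d)) * (starRingEnd ℂ) (ψ ((n : ZMod d))) := by
  rw [← Finset.sum_filter]
  refine (Finset.sum_bij (fun ψ _ => DirichletCharacter.changeLevel hd ψ) ?_ ?_ ?_ ?_).symm
  · intro ψ _
    simp only [Finset.mem_filter, Finset.mem_univ, true_and]
    exact DirichletCharacter.changeLevel_factorsThrough _ hd
  · intro ψ₁ _ ψ₂ _ hψ
    exact DirichletCharacter.changeLevel_injective hd hψ
  · intro χ hχ
    simp only [Finset.mem_filter, Finset.mem_univ, true_and] at hχ
    obtain ⟨hdvd, ψ, hψ⟩ := hχ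
    exact ⟨ψ, Finset.mem_univ _, hψ.symm⟩
  · intro ψ _
    rw [changeLevel_apply_intCast hd ψ m hm, changeLevel_apply_intCast hd ψ n hn]

private lemma prim_sum {q : ℕ} [NeZero q] (m n : ℤ)
    (hm : IsUnit ((m : ZMod q))) (hn : IsUnit ((n : ZMod q))) :
    (∑ χ : DirichletCharacter ℂ q,
        if χ.IsPrimitive then χ ((m : ZMod q)) * (starRingEnd ℂ) (χ ((n : ZMod q))) else 0)
      = ∑ r ∈ q.divisors,
          if (r : ℤ) ∣ (m - n) then
            ((ArithmeticFunction.moebius (q / r) : ℤ) : ℂ) * (r.totient : ℂ) else 0 := by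
  have hq : q ≠ 0 := NeZero.ne q
  -- Step 1: indicator identity
  have step1 : ∀ χ : DirichletCharacter ℂ q,
      (if χ.IsPrimitive then χ ((m : ZMod q)) * (starRingEnd ℂ) (χ ((n : ZMod q))) else 0)
        = ∑ d ∈ q.divisors, (if χ.FactorsThrough d then
            ((ArithmeticFunction.moebius (q / d) : ℤ) : ℂ) else 0)
          * (χ ((m : ZMod q)) * (starRingEnd ℂ) (χ ((n : ZMod q)))) := by
    intro χ
    rw [← Finset.sum_mul]
    have h1 : (∑ d ∈ q.divisors, if χ.FactorsThrough d then
        ((ArithmeticFunction.moebius (q / d) : ℤ) : ℂ) else 0)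
        = if χ.IsPrimitive then 1 else 0 := by
      have h2 : ∀ d ∈ q.divisors, (if χ.FactorsThrough d then
          ((ArithmeticFunction.moebius (q / d) : ℤ) : ℂ) else 0)
          = (if χ.conductor ∣ d then ((ArithmeticFunction.moebius (q / d) : ℤ) : ℂ) else 0) := by
        intro d hdm
        rw [Nat.mem_divisors] at hdm
        exact if_congr (factorsThrough_iff_conductor_dvd hdm.1) rfl rfl
      rw [Finset.sum_congr rfl h2, moebius_indicator hq χ.conductor_dvd_level]
      exact if_congr (DirichletCharacter.isPrimitive_def χ).symm rfl rfl
    rw [h1]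
    split <;> simp
  rw [Finset.sum_congr rfl (fun χ _ => step1 χ), Finset.sum_comm]
  apply Finset.sum_congr rfl
  intro d hdm
  rw [Nat.mem_divisors] at hdm
  have : NeZero d := ⟨fun h0 => hq (Nat.eq_zero_of_zero_dvd (h0 ▸ hdm.1))⟩
  have hsplit : ∀ χ : DirichletCharacter ℂ q,
      (if χ.FactorsThrough d then ((ArithmeticFunction.moebius (q / d) : ℤ) : ℂ) else 0)
        * (χ ((m : ZMod q)) * (starRingEnd ℂ) (χ ((n : ZMod q))))
      = ((ArithmeticFunction.moebius (q / d) : ℤ) : ℂ)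
        * (if χ.FactorsThrough d then
            χ ((m : ZMod q)) * (starRingEnd ℂ) (χ ((n : ZMod q))) else 0) := by
    intro χ; split <;> simp
  rw [Finset.sum_congr rfl (fun χ _ => hsplit χ)]
  rw [← Finset.mul_sum, sum_factorsThrough hdm.1 m n hm hn,
    sum_all_chars m n (isUnit_cast_down hdm.1 m hm) (isUnit_cast_down hdm.1 n hn)]
  split <;> simp

/-- **Orthogonality relations.** For `(mn, q) = 1`:
(i) the sum of `χ(m)χ̄(n)` over primitive characters mod `q` equals
`∑_{q = dr, r ∣ m-n} μ(d) φ(r)`;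
(ii) the sum over primitive even characters equals
`(1/2) ∑_{q = dr, r ∣ m±n} μ(d) φ(r)` (both signs summed). -/
theorem orthogonality_primitive_characters (q : ℕ) (hq : 0 < q) (m n : ℤ)
    (h : Int.gcd (m * n) q = 1) :
    (∑ χ : DirichletCharacter ℂ q,
        (if χ.IsPrimitive then χ ((m : ZMod q)) * (starRingEnd ℂ) (χ ((n : ZMod q))) else 0)) =
      (∑ r ∈ q.divisors,
        if (r : ℤ) ∣ (m - n) then ((ArithmeticFunction.moebius (q / r) : ℤ) : ℂ) * (r.totient : ℂ)
        else 0) ∧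
    (∑ χ : DirichletCharacter ℂ q,
        (if χ.IsPrimitive ∧ χ.Even then χ ((m : ZMod q)) * (starRingEnd ℂ) (χ ((n : ZMod q)))
         else 0)) =
      (1 / 2 : ℂ) *
        ((∑ r ∈ q.divisors,
            if (r : ℤ) ∣ (m - n) then
              ((ArithmeticFunction.moebius (q / r) : ℤ) : ℂ) * (r.totient : ℂ)
            else 0) +
          (∑ r ∈ q.divisors,
            if (r : ℤ) ∣ (m + n) then
              ((ArithmeticFunction.moebius (q / r) : ℤ) : ℂ) * (r.totient : ℂ)
            else 0)) := by
  have : NeZero q := ⟨hq.ne'⟩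
  have hco : IsCoprime (m * n) (q : ℤ) := Int.isCoprime_iff_gcd_eq_one.mpr h
  have hmq : Int.gcd m q = 1 := Int.isCoprime_iff_gcd_eq_one.mp hco.of_mul_left_left
  have hnq : Int.gcd n q = 1 := Int.isCoprime_iff_gcd_eq_one.mp hco.of_mul_left_right
  have hm : IsUnit ((m : ZMod q)) := isUnit_intCast_of_gcd hmq
  have hn : IsUnit ((n : ZMod q)) := isUnit_intCast_of_gcd hnq
  have hmneg : IsUnit (((-m : ℤ) : ZMod q)) := by push_cast; exact hm.neg
  refine ⟨prim_sum m n hm hn, ?_⟩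
  have hps1 := prim_sum m n hm hn
  have hps2 := prim_sum (-m) n hmneg hn
  have hps2' : (∑ χ : DirichletCharacter ℂ q,
      if χ.IsPrimitive then χ (((-m : ℤ) : ZMod q)) * (starRingEnd ℂ) (χ ((n : ZMod q))) else 0)
      = ∑ r ∈ q.divisors,
          if (r : ℤ) ∣ (m + n) then
            ((ArithmeticFunction.moebius (q / r) : ℤ) : ℂ) * (r.totient : ℂ) else 0 := by
    rw [hps2]
    apply Finset.sum_congr rfl
    intro r _
    have hiff : ((r : ℤ) ∣ (-m - n)) ↔ ((r : ℤ) ∣ (m + n)) := by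
      have heq : (-m - n : ℤ) = -(m + n) := by ring
      rw [heq, dvd_neg]
    exact if_congr hiff rfl rfl
  have hpoint : ∀ χ : DirichletCharacter ℂ q,
      (if χ.IsPrimitive ∧ χ.Even then χ ((m : ZMod q)) * (starRingEnd ℂ) (χ ((n : ZMod q))) else 0)
      = (1 / 2 : ℂ) *
          ((if χ.IsPrimitive then χ ((m : ZMod q)) * (starRingEnd ℂ) (χ ((n : ZMod q))) else 0)
            + (if χ.IsPrimitive then
                χ (((-m : ℤ) : ZMod q)) * (starRingEnd ℂ) (χ ((n : ZMod q))) else 0)) := by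
    intro χ
    have hnegapp : χ (((-m : ℤ) : ZMod q)) = χ (-1) * χ ((m : ZMod q)) := by
      have heq : (((-m : ℤ)) : ZMod q) = -1 * ((m : ℤ) : ZMod q) := by push_cast; ring
      rw [heq, map_mul]
    by_cases hp : χ.IsPrimitive
    · rcases χ.even_or_odd with he | ho
      · have h1 : χ (-1) = 1 := he
        rw [if_pos ⟨hp, he⟩, if_pos hp, if_pos hp, hnegapp, h1, one_mul]
        ring
      · have h1 : χ (-1) = -1 := ho
        have hne : ¬χ.Even := by
          intro he
          have h2 : χ (-1) = 1 := he
          rw [h2] at h1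
          norm_num at h1
        rw [if_neg (fun hc => hne hc.2), if_pos hp, if_pos hp, hnegapp, h1]
        ring
    · rw [if_neg (fun hc => hp hc.1), if_neg hp, if_neg hp]
      ring
  rw [Finset.sum_congr rfl (fun χ _ => hpoint χ), ← Finset.mul_sum, Finset.sum_add_distrib,
    hps1, hps2']

end
end

section
/- Let u, v ∈ ℂ be such that none of u, v−u, 1−v is a non-positive integer. Then Γ(u)Γ(v−u)/Γ(v) + Γ(u)Γ(1−v)/Γ(1+u−v) + Γ(v−u)Γ(1−v)/Γ(1−u) = π^{1/2} · Γ(u/2) Γ((1−v)/2) Γ((v−u)/2) / ( Γ((1−u)/2) Γ(v/2) Γ((1−v+u)/2) ). -/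
open Complex Real

noncomputable section

lemma aux_div_Gamma' (z w : ℂ) (hz : Complex.Gamma z ≠ 0) :
    w / Complex.Gamma (1 - z) = w * Complex.Gamma z * Complex.sin (π * z) / π := by
  have h := Complex.Gamma_mul_Gamma_one_sub z
  have hpi : (π : ℂ) ≠ 0 := by exact_mod_cast Real.pi_ne_zero
  by_cases hs : Complex.sin (π * z) = 0
  · rw [hs, div_zero] at h
    have h1 : Complex.Gamma (1 - z) = 0 := (mul_eq_zero.mp h).resolve_left hz
    rw [h1, div_zero, hs, mul_zero, zero_div]
  · have h1 : Complex.Gamma (1 - z) ≠ 0 := by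
      intro h0
      rw [h0, mul_zero] at h
      exact hpi ((div_eq_zero_iff.mp h.symm).resolve_right hs)
    rw [eq_div_iff hs] at h
    rw [div_eq_div_iff h1 hpi]
    linear_combination (-w) * h

lemma trig_key' (A B : ℂ) :
    Complex.sin (2*A) + Complex.sin (2*B) + Complex.sin (2*A + 2*B)
      = 4 * Complex.cos A * Complex.cos B * Complex.sin (A + B) := by
  simp only [Complex.sin_add, Complex.cos_add, Complex.sin_two_mul, Complex.cos_two_mul]
  ring

lemma aux_half' (x : ℂ) (hx : ∀ n : ℕ, x ≠ -(n : ℂ)) :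
    Complex.Gamma (x/2) / Complex.Gamma ((1 - x)/2)
      = Complex.Gamma x * Complex.cos (π * x / 2) * (2:ℂ) ^ ((1:ℂ) - x) * (Real.sqrt π : ℂ) / π := by
  have hpi : (π : ℂ) ≠ 0 := by exact_mod_cast Real.pi_ne_zero
  have hrefl : Complex.Gamma ((1-x)/2) * Complex.Gamma ((1+x)/2)
      = π / Complex.cos (π * x / 2) := by
    have h := Complex.Gamma_mul_Gamma_one_sub ((1-x)/2)
    rw [show (1 : ℂ) - (1-x)/2 = (1+x)/2 by ring,
        show (π:ℂ) * ((1-x)/2) = π/2 - π*x/2 by ring, Complex.sin_pi_div_two_sub] at h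
    exact h
  have hne : Complex.Gamma ((1+x)/2) ≠ 0 := by
    apply Complex.Gamma_ne_zero
    intro n hn
    apply hx (2*n+1)
    push_cast
    linear_combination 2 * hn
  have hdup := Complex.Gamma_mul_Gamma_add_half (x/2)
  rw [show x/2 + 1/2 = (1+x)/2 by ring, show 2 * (x/2) = x by ring] at hdup
  by_cases hc : Complex.cos (π * x / 2) = 0
  · rw [hc, div_zero] at hrefl
    have h1 : Complex.Gamma ((1-x)/2) = 0 := (mul_eq_zero.mp hrefl).resolve_right hne
    rw [h1, div_zero, hc]
    ring
  · have h1 : Complex.Gamma ((1-x)/2) ≠ 0 := by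
      intro h0
      rw [h0, zero_mul] at hrefl
      exact hpi ((div_eq_zero_iff.mp hrefl.symm).resolve_right hc)
    rw [eq_div_iff hc] at hrefl
    rw [div_eq_div_iff h1 hpi]
    linear_combination (-(Complex.Gamma (x/2))) * hrefl
      + Complex.Gamma ((1-x)/2) * Complex.cos (π * x / 2) * hdup

/-- A Gamma-function identity: if none of `u`, `v-u`, `1-v` is a non-positive integer, then
`Γ(u)Γ(v-u)/Γ(v) + Γ(u)Γ(1-v)/Γ(1+u-v) + Γ(v-u)Γ(1-v)/Γ(1-u)
  = √π Γ(u/2)Γ((1-v)/2)Γ((v-u)/2) / (Γ((1-u)/2)Γ(v/2)Γ((1-v+u)/2))`.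
(At poles of `Γ`, Mathlib's `Complex.Gamma` takes the value `0`, so the quotients
implement the entire reciprocal Gamma function.) -/
theorem gamma_sum_identity (u v : ℂ)
    (hu : ∀ n : ℕ, u ≠ -(n : ℂ))
    (hvu : ∀ n : ℕ, v - u ≠ -(n : ℂ))
    (hv : ∀ n : ℕ, 1 - v ≠ -(n : ℂ)) :
    Complex.Gamma u * Complex.Gamma (v - u) / Complex.Gamma v +
      Complex.Gamma u * Complex.Gamma (1 - v) / Complex.Gamma (1 + u - v) +
      Complex.Gamma (v - u) * Complex.Gamma (1 - v) / Complex.Gamma (1 - u) =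
    (Real.sqrt Real.pi : ℂ) *
      (Complex.Gamma (u / 2) * Complex.Gamma ((1 - v) / 2) * Complex.Gamma ((v - u) / 2)) /
      (Complex.Gamma ((1 - u) / 2) * Complex.Gamma (v / 2) *
        Complex.Gamma ((1 - v + u) / 2)) := by
  have hpi : (π : ℂ) ≠ 0 := by exact_mod_cast Real.pi_ne_zero
  have hGa := Complex.Gamma_ne_zero hu
  have hGb := Complex.Gamma_ne_zero hvu
  have hGc := Complex.Gamma_ne_zero hv
  -- LHS pieces
  have e1 : Complex.Gamma u * Complex.Gamma (v-u) / Complex.Gamma v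
      = Complex.Gamma u * Complex.Gamma (v-u) * Complex.Gamma (1-v) * Complex.sin (π*(1-v)) / π := by
    have h := aux_div_Gamma' (1-v) (Complex.Gamma u * Complex.Gamma (v-u)) hGc
    rwa [show (1:ℂ) - (1-v) = v by ring] at h
  have e2 : Complex.Gamma u * Complex.Gamma (1-v) / Complex.Gamma (1+u-v)
      = Complex.Gamma u * Complex.Gamma (1-v) * Complex.Gamma (v-u) * Complex.sin (π*(v-u)) / π := by
    have h := aux_div_Gamma' (v-u) (Complex.Gamma u * Complex.Gamma (1-v)) hGb
    rwa [show (1:ℂ) - (v-u) = 1+u-v by ring] at h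
  have e3 : Complex.Gamma (v-u) * Complex.Gamma (1-v) / Complex.Gamma (1-u)
      = Complex.Gamma (v-u) * Complex.Gamma (1-v) * Complex.Gamma u * Complex.sin (π*u) / π :=
    aux_div_Gamma' u (Complex.Gamma (v-u) * Complex.Gamma (1-v)) hGa
  -- RHS pieces
  have r1 := aux_half' u hu
  have r2 := aux_half' (1-v) hv
  have r3 := aux_half' (v-u) hvu
  rw [show ((1:ℂ) - (1-v))/2 = v/2 by ring, show (1:ℂ) - (1-v) = v by ring] at r2
  rw [show ((1:ℂ) - (v-u))/2 = (1-v+u)/2 by ring, show (1:ℂ) - (v-u) = 1-v+u by ring] at r3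
  -- trig identity
  have hsum : Complex.sin (π*(1-v)) + Complex.sin (π*(v-u)) + Complex.sin (π*u)
      = 4 * Complex.cos (π*u/2) * Complex.cos (π*(v-u)/2) * Complex.cos (π*(1-v)/2) := by
    have e₁ : Complex.sin (π*(1-v)) = Complex.sin (π*u + π*(v-u)) := by
      rw [show (π:ℂ)*u + π*(v-u) = π - π*(1-v) by ring, Complex.sin_pi_sub]
    have e₂ : Complex.cos (π*(1-v)/2) = Complex.sin (π*u/2 + π*(v-u)/2) := by
      rw [show (π:ℂ)*(1-v)/2 = π/2 - (π*u/2 + π*(v-u)/2) by ring, Complex.cos_pi_div_two_sub]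
    have h := trig_key' (π*u/2) (π*(v-u)/2)
    rw [show 2*((π:ℂ)*u/2) = π*u by ring, show 2*((π:ℂ)*(v-u)/2) = π*(v-u) by ring] at h
    rw [e₁, e₂]
    linear_combination h
  -- power and sqrt facts
  have hpow : (2:ℂ)^((1:ℂ)-u) * (2:ℂ)^(v) * (2:ℂ)^((1:ℂ)-v+u) = 4 := by
    rw [← Complex.cpow_add _ _ two_ne_zero, ← Complex.cpow_add _ _ two_ne_zero,
        show (1:ℂ)-u+v+((1:ℂ)-v+u) = ((2:ℕ):ℂ) by push_cast; ring, Complex.cpow_natCast]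
    norm_num
  have hsqrt : ((Real.sqrt π : ℝ) : ℂ) * ((Real.sqrt π : ℝ) : ℂ) = (π : ℂ) := by
    rw [← Complex.ofReal_mul, Real.mul_self_sqrt Real.pi_pos.le]
  rw [e1, e2, e3,
      show (Real.sqrt Real.pi : ℂ) *
        (Complex.Gamma (u / 2) * Complex.Gamma ((1 - v) / 2) * Complex.Gamma ((v - u) / 2)) /
        (Complex.Gamma ((1 - u) / 2) * Complex.Gamma (v / 2) *
          Complex.Gamma ((1 - v + u) / 2))
        = (Real.sqrt Real.pi : ℂ) *
          ((Complex.Gamma (u / 2) / Complex.Gamma ((1 - u) / 2)) *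
           (Complex.Gamma ((1 - v) / 2) / Complex.Gamma (v / 2)) *
           (Complex.Gamma ((v - u) / 2) / Complex.Gamma ((1 - v + u) / 2)))
        from by rw [div_mul_div_comm, div_mul_div_comm, mul_div_assoc],
      r1, r2, r3]
  field_simp
  rw [show (1-v)*(π:ℂ) = π*(1-v) by ring, show (v-u)*(π:ℂ) = π*(v-u) by ring,
    show u*(π:ℂ) = π*u by ring]
  linear_combination
    ((π:ℂ)^2) * hsum
    - (((Real.sqrt π : ℝ):ℂ)^4
        * (Complex.cos (π*u/2) * Complex.cos (π*(v-u)/2) * Complex.cos (π*(1-v)/2))) * hpow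
    - (4 * (Complex.cos (π*u/2) * Complex.cos (π*(v-u)/2) * Complex.cos (π*(1-v)/2))
        * (((Real.sqrt π : ℝ):ℂ) * ((Real.sqrt π : ℝ):ℂ) + (π:ℂ))) * hsqrt

end
end

section
/- There is an absolute constant K such that for every s ∈ ℂ with −1 ≤ Re s ≤ 1/3: |Γ(1/4 − s/2) / Γ(1/4 + s/2)| ≤ K · (|s|+1)^{−Re s}. -/
open Complex

noncomputable section

namespace GQBAux

open Set Filter
open scoped Real

lemma re14m (z : ℂ) : (1/4 - z/2).re = 1/4 - z.re/2 := by
  simp [Complex.div_ofNat_re]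

lemma re14p (z : ℂ) : (1/4 + z/2).re = 1/4 + z.re/2 := by
  simp [Complex.div_ofNat_re]

lemma im14m (z : ℂ) : (1/4 - z/2).im = -(z.im/2) := by
  simp [Complex.div_ofNat_im]

lemma im14p (z : ℂ) : (1/4 + z/2).im = z.im/2 := by
  simp [Complex.div_ofNat_im]

lemma re54 (z : ℂ) : (5/4 - z/2).re = 5/4 - z.re/2 := by
  simp [Complex.div_ofNat_re]

lemma im54 (z : ℂ) : (5/4 - z/2).im = -(z.im/2) := by
  simp [Complex.div_ofNat_im]

lemma re4sq (z : ℂ) : (4 - z^2).re = 4 - z.re^2 + z.im^2 := by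
  simp [pow_two, Complex.mul_re]; ring

lemma im4sq (z : ℂ) : (4 - z^2).im = -(2*z.re*z.im) := by
  simp [pow_two, Complex.mul_im]; ring

lemma re4sq_pos {s : ℂ} (hx : |s.re| ≤ 3/2) : 0 < (4 - s^2).re := by
  rw [re4sq]
  nlinarith [_root_.sq_abs s.re, abs_nonneg s.re, sq_nonneg s.im]

lemma norm_Gamma_le {z : ℂ} (hz : 0 < z.re) : ‖Complex.Gamma z‖ ≤ Real.Gamma z.re := by
  rw [Complex.Gamma_eq_integral hz, Real.Gamma_eq_integral hz, Complex.GammaIntegral]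
  calc ‖∫ x in Ioi (0:ℝ), (Real.exp (-x) : ℂ) * (x:ℂ) ^ (z-1)‖
      ≤ ∫ x in Ioi (0:ℝ), ‖(Real.exp (-x) : ℂ) * (x:ℂ) ^ (z-1)‖ :=
        MeasureTheory.norm_integral_le_integral_norm _
    _ = ∫ x in Ioi (0:ℝ), Real.exp (-x) * x ^ (z.re - 1) := by
        refine MeasureTheory.setIntegral_congr_fun measurableSet_Ioi (fun x hx => ?_)
        rw [norm_mul, Complex.norm_cpow_eq_rpow_re_of_pos hx]
        simp [abs_of_pos (Real.exp_pos _), Complex.sub_re, Complex.one_re, Complex.norm_exp]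

lemma abs_arg_le {z : ℂ} (hz : 0 < z.re) : |z.arg| ≤ π/2 * (|z.im| / z.re) := by
  have habs : (0:ℝ) < ‖z‖ := lt_of_lt_of_le hz (Complex.re_le_norm z)
  have h1 : |z.arg| ≤ π/2 := Complex.abs_arg_le_pi_div_two_iff.2 hz.le
  have h2 : 2/π * |z.arg| ≤ Real.sin |z.arg| := Real.mul_le_sin (abs_nonneg _) h1
  have h3 : Real.sin |z.arg| ≤ |Real.sin z.arg| := by
    rcases le_or_gt 0 z.arg with h | h
    · rw [_root_.abs_of_nonneg h]; exact le_abs_self _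
    · rw [_root_.abs_of_neg h, Real.sin_neg]; exact neg_le_abs _
  have h4 : |Real.sin z.arg| = |z.im| / ‖z‖ := by
    rw [Complex.sin_arg, abs_div, _root_.abs_of_pos habs]
  have h5 : |z.im| / ‖z‖ ≤ |z.im| / z.re := by
    gcongr
    · exact Complex.re_le_norm z
  have hπ := Real.pi_pos
  have hch : 2/π * |z.arg| ≤ |z.im| / z.re := by
    calc 2/π * |z.arg| ≤ |Real.sin z.arg| := h2.trans h3
      _ = |z.im| / ‖z‖ := h4
      _ ≤ |z.im| / z.re := h5
  calc |z.arg| = π/2 * (2/π * |z.arg|) := by field_simp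
    _ ≤ π/2 * (|z.im| / z.re) := by
        apply mul_le_mul_of_nonneg_left hch (by positivity)

lemma norm_sin_le (z : ℂ) : ‖Complex.sin z‖ ≤ Real.exp |z.im| := by
  rw [Complex.sin]
  calc ‖(Complex.exp (-z * I) - Complex.exp (z * I)) * I / 2‖
      = ‖Complex.exp (-z * I) - Complex.exp (z * I)‖ / 2 := by
        rw [norm_div, norm_mul]; simp
    _ ≤ (‖Complex.exp (-z * I)‖ + ‖Complex.exp (z * I)‖) / 2 := by
        gcongr; exact norm_sub_le _ _
    _ ≤ (Real.exp |z.im| + Real.exp |z.im|) / 2 := by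
        gcongr
        · rw [Complex.norm_exp]
          apply Real.exp_le_exp.2
          rw [Complex.mul_I_re, Complex.neg_im, neg_neg]
          exact le_abs_self _
        · rw [Complex.norm_exp]
          apply Real.exp_le_exp.2
          rw [Complex.mul_I_re]
          exact neg_le_abs _
    _ = Real.exp |z.im| := by ring

lemma Gamma_inv_eq {z : ℂ} (hz : z.re < 1) :
    (Complex.Gamma z)⁻¹ = Complex.sin (π * z) * Complex.Gamma (1 - z) / π := by
  by_cases hnat : ∃ m : ℕ, z = -m
  · obtain ⟨m, rfl⟩ := hnat
    rw [Complex.Gamma_neg_nat_eq_zero, inv_zero]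
    have : Complex.sin (π * (-m : ℂ)) = 0 := by
      apply Complex.sin_eq_zero_iff.2
      exact ⟨-m, by push_cast; ring⟩
    rw [this, zero_mul, zero_div]
  · push_neg at hnat
    have hΓ : Complex.Gamma z ≠ 0 := Complex.Gamma_ne_zero hnat
    have hΓ' : Complex.Gamma (1 - z) ≠ 0 := by
      apply Complex.Gamma_ne_zero_of_re_pos
      rw [Complex.sub_re, Complex.one_re]; linarith
    have hrefl := Complex.Gamma_mul_Gamma_one_sub z
    have hsin : Complex.sin (π * z) ≠ 0 := by
      intro h
      rw [h, div_zero] at hrefl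
      exact hΓ (by simpa [hΓ'] using mul_eq_zero.1 hrefl |>.resolve_right hΓ')
    have hπ : (π : ℂ) ≠ 0 := by simpa using Real.pi_ne_zero
    have key : Complex.Gamma z * Complex.Gamma (1-z) * Complex.sin (π*z) = π := by
      rw [hrefl, div_mul_cancel₀ _ hsin]
    field_simp
    linear_combination (-1 : ℂ) * key

lemma rpow_comp {u v r : ℝ} (hu : 0 < u) (hv : 0 < v) (h1 : u ≤ 4 * v) (h2 : v ≤ 2 * u)
    (hr : |r| ≤ 1) : u ^ r ≤ 4 * v ^ r := by
  rcases le_or_gt 0 r with h | h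
  · calc u ^ r ≤ (4 * v) ^ r := Real.rpow_le_rpow hu.le h1 h
      _ = 4 ^ r * v ^ r := Real.mul_rpow (by norm_num) hv.le
      _ ≤ 4 * v ^ r := by
          apply mul_le_mul_of_nonneg_right _ (Real.rpow_nonneg hv.le r)
          calc (4:ℝ) ^ r ≤ 4 ^ (1:ℝ) :=
                Real.rpow_le_rpow_of_exponent_le (by norm_num) (abs_le.1 hr).2
            _ = 4 := by norm_num [Real.rpow_natCast 4 1]
  · have hv2 : v / 2 ≤ u := by linarith
    calc u ^ r ≤ (v / 2) ^ r :=
          Real.rpow_le_rpow_of_nonpos (by linarith) hv2 h.le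
      _ = v ^ r * ((2:ℝ) ^ r)⁻¹ := by
          rw [div_eq_mul_inv, Real.mul_rpow hv.le (by norm_num), Real.inv_rpow (by norm_num)]
      _ ≤ v ^ r * 4 := by
          apply mul_le_mul_of_nonneg_left _ (Real.rpow_nonneg hv.le r)
          rw [← Real.rpow_neg (by norm_num)]
          calc (2:ℝ) ^ (-r) ≤ 2 ^ (1:ℝ) := Real.rpow_le_rpow_of_exponent_le (by norm_num)
                (by rw [abs_le] at hr; linarith)
            _ ≤ 4 := by rw [Real.rpow_one]; norm_num
      _ = 4 * v ^ r := by ring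

lemma expfac_bound {s w : ℂ} (hx : |s.re| ≤ 1) (hw1 : |w.re| ≤ 1)
    (hw2 : |w.im| ≤ (|s.im| + 2)/2) :
    ‖Complex.exp (w * Complex.log (4 - s^2))‖ ≤ 4 * Real.exp 4 * (1 + ‖s‖) ^ (2*w.re) := by
  have hx2 : s.re^2 ≤ 1 := by nlinarith [_root_.sq_abs s.re, abs_nonneg s.re]
  have hrepos : 0 < (4 - s^2).re := re4sq_pos (by linarith)
  have hu : 0 < ‖(4 - s^2 : ℂ)‖ :=
    lt_of_lt_of_le hrepos (Complex.re_le_norm _)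
  have hθ : |(4 - s^2).arg| ≤ π/2 * ((2 * _root_.abs s.re * _root_.abs s.im) / (4 - s.re^2 + s.im^2)) := by
    have h := abs_arg_le hrepos
    rw [re4sq, im4sq] at h
    have habs : |(-(2*s.re*s.im))| = 2 * _root_.abs s.re * _root_.abs s.im := by
      rw [abs_neg, abs_mul, abs_mul]; norm_num
    rw [habs] at h
    exact h
  have hwθ : |w.im * (4 - s^2).arg| ≤ 4 := by
    have hd : (0:ℝ) < 4 - s.re^2 + s.im^2 := by rw [← re4sq]; exact hrepos
    rw [abs_mul]
    calc |w.im| * |(4 - s^2).arg|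
        ≤ ((_root_.abs s.im + 2)/2) * (π/2 * ((2 * _root_.abs s.re * _root_.abs s.im) / (4 - s.re^2 + s.im^2))) := by
          apply mul_le_mul hw2 hθ (abs_nonneg _) (by positivity)
      _ ≤ 4 := by
          have hd' : (4 - s.re^2 + s.im^2) ≠ 0 := hd.ne'
          have e : ((_root_.abs s.im + 2)/2) * (π/2 * ((2 * _root_.abs s.re * _root_.abs s.im) / (4 - s.re^2 + s.im^2)))
              = (π * (_root_.abs s.re * _root_.abs s.im) * (_root_.abs s.im + 2) / 2) / (4 - s.re^2 + s.im^2) := by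
            field_simp
          rw [e, div_le_iff₀ hd]
          have hab : _root_.abs s.re * _root_.abs s.im ≤ _root_.abs s.im :=
            mul_le_of_le_one_left (abs_nonneg s.im) hx
          have key1 : π * (_root_.abs s.re * _root_.abs s.im) * (_root_.abs s.im + 2)
              ≤ 4 * (_root_.abs s.im * (_root_.abs s.im + 2)) := by
            have h2 : (0:ℝ) ≤ _root_.abs s.im + 2 := by positivity
            have h3 : π * (_root_.abs s.re * _root_.abs s.im) ≤ 4 * _root_.abs s.im := by
              nlinarith [Real.pi_le_four, Real.pi_pos, abs_nonneg s.im,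
                mul_nonneg (abs_nonneg s.re) (abs_nonneg s.im)]
            nlinarith [mul_nonneg (abs_nonneg s.re) (abs_nonneg s.im), Real.pi_pos]
          nlinarith [key1, _root_.sq_abs s.im, sq_nonneg (_root_.abs s.im - 1),
            abs_nonneg s.im]
  have hnorm : ‖Complex.exp (w * Complex.log (4 - s^2))‖ =
      Real.exp (w.re * Real.log (‖(4 - s^2 : ℂ)‖) - w.im * (4 - s^2).arg) := by
    rw [Complex.norm_exp]
    congr 1
    rw [Complex.mul_re, Complex.log_re, Complex.log_im]
  rw [hnorm]
  have step1 : Real.exp (w.re * Real.log (‖(4 - s^2 : ℂ)‖) - w.im * (4 - s^2).arg)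
      ≤ Real.exp (w.re * Real.log (‖(4 - s^2 : ℂ)‖)) * Real.exp 4 := by
    rw [← Real.exp_add]
    apply Real.exp_le_exp.2
    have := abs_le.1 hwθ
    linarith
  have step2 : Real.exp (w.re * Real.log (‖(4 - s^2 : ℂ)‖))
      = ‖(4 - s^2 : ℂ)‖ ^ w.re := by
    rw [Real.rpow_def_of_pos hu, mul_comm]
  have hv : (0:ℝ) < (1 + ‖s‖)^2 := by positivity
  have h1 : ‖(4 - s^2 : ℂ)‖ ≤ 4 * (1 + ‖s‖)^2 := by
    calc ‖(4 - s^2 : ℂ)‖ ≤ ‖(4:ℂ)‖ + ‖s^2‖ :=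
          norm_sub_le 4 (s^2)
      _ = 4 + ‖s‖^2 := by
          rw [norm_pow]; norm_num
      _ ≤ 4 * (1 + ‖s‖)^2 := by nlinarith [norm_nonneg s]
  have h2 : (1 + ‖s‖)^2 ≤ 2 * ‖(4 - s^2 : ℂ)‖ := by
    have hs2 : ‖s‖^2 = s.re^2 + s.im^2 := by
      rw [Complex.sq_norm, Complex.normSq_apply]; ring
    have hre : (4:ℝ) - s.re^2 + s.im^2 ≤ ‖(4 - s^2 : ℂ)‖ := by
      rw [← re4sq]; exact Complex.re_le_norm _
    nlinarith [norm_nonneg s, sq_nonneg (1 - ‖s‖)]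
  have step3 : ‖(4 - s^2 : ℂ)‖ ^ w.re ≤ 4 * ((1 + ‖s‖)^2) ^ w.re :=
    rpow_comp hu hv h1 h2 hw1
  have step4 : ((1 + ‖s‖)^2 : ℝ) ^ w.re = (1 + ‖s‖) ^ (2*w.re) := by
    rw [← Real.rpow_natCast (1 + ‖s‖) 2, ← Real.rpow_mul (by positivity)]
    norm_num
  refine le_trans step1 ?_
  rw [step2, ← step4]
  calc ‖(4 - s^2 : ℂ)‖ ^ w.re * Real.exp 4
      ≤ (4 * ((1 + ‖s‖)^2) ^ w.re) * Real.exp 4 :=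
        mul_le_mul_of_nonneg_right step3 (Real.exp_nonneg _)
    _ = 4 * Real.exp 4 * ((1 + ‖s‖)^2) ^ w.re := by ring

lemma MG_exists : ∃ M : ℝ, 1 ≤ M ∧ ∀ x ∈ Icc (1/4:ℝ) (5/4), Real.Gamma x ≤ M := by
  have hcont : ContinuousOn Real.Gamma (Icc (1/4:ℝ) (5/4)) := by
    intro x hx
    have h0 : (0:ℝ) < x := lt_of_lt_of_le (by norm_num) hx.1
    have : DifferentiableAt ℝ Real.Gamma x := by
      apply Real.differentiableAt_Gamma
      intro m h
      rw [h] at h0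
      have : ((m:ℝ)) ≥ 0 := Nat.cast_nonneg m
      linarith
    exact this.continuousAt.continuousWithinAt
  obtain ⟨x₀, _, hmax⟩ := isCompact_Icc.exists_isMaxOn
    (⟨1/4, by constructor <;> norm_num⟩ : (Icc (1/4:ℝ) (5/4)).Nonempty) hcont
  exact ⟨max 1 (Real.Gamma x₀), le_max_left _ _,
    fun x hx => (hmax hx).trans (le_max_right _ _)⟩

lemma norm_inv_Gamma_le {MG : ℝ} (hMG : ∀ x ∈ Icc (1/4:ℝ) (5/4), Real.Gamma x ≤ MG)
    {z : ℂ} (h1 : -1/4 ≤ z.re) (h2 : z.re ≤ 3/4) :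
    ‖(Complex.Gamma z)⁻¹‖ ≤ MG * Real.exp (π * |z.im|) := by
  have hπ := Real.pi_pos
  have hπ1 := Real.one_le_pi_div_two
  rw [Gamma_inv_eq (by linarith)]
  have hsin : ‖Complex.sin (π * z)‖ ≤ Real.exp (π * |z.im|) := by
    have := norm_sin_le ((π : ℂ) * z)
    have him : ((π : ℂ) * z).im = π * z.im := by
      simp [Complex.mul_im]
    rw [him] at this
    rwa [abs_mul, _root_.abs_of_pos hπ] at this
  have hΓ : ‖Complex.Gamma (1 - z)‖ ≤ MG := by
    have hre : (1 - z).re = 1 - z.re := by simp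
    have hpos : 0 < (1 - z).re := by rw [hre]; linarith
    refine (norm_Gamma_le hpos).trans ?_
    apply hMG
    rw [hre]
    constructor <;> [linarith; linarith]
  have hMG0 : 0 ≤ MG := le_trans (by norm_num [Real.Gamma_one]) (hMG 1 (by constructor <;> norm_num))
  calc ‖Complex.sin (π * z) * Complex.Gamma (1 - z) / π‖
      = ‖Complex.sin (π * z)‖ * ‖Complex.Gamma (1 - z)‖ / π := by
        rw [norm_div, norm_mul]
        congr 1
        simp [_root_.abs_of_pos hπ]
    _ ≤ Real.exp (π * |z.im|) * MG / 1 := by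
        apply div_le_div₀ (by positivity) _ (by norm_num) (by linarith)
        exact mul_le_mul hsin hΓ (norm_nonneg _) (Real.exp_nonneg _)
    _ = MG * Real.exp (π * |z.im|) := by ring


lemma wre (z : ℂ) : ((z-1)/2).re = (z.re - 1)/2 := by
  rw [Complex.div_ofNat_re, Complex.sub_re, Complex.one_re]
lemma wim (z : ℂ) : ((z-1)/2).im = z.im/2 := by
  rw [Complex.div_ofNat_im, Complex.sub_im, Complex.one_im, sub_zero]

lemma stripA {s : ℂ} (h1 : -1 ≤ s.re) (h2 : s.re ≤ 0) :
    ‖Complex.Gamma (1/4 - s/2) * (Complex.Gamma (1/4 + s/2))⁻¹‖ ≤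
      (16 * Real.exp 8) * (1 + ‖s‖) ^ (-s.re) := by
  obtain ⟨MG, hMG1, hMG⟩ := MG_exists
  have hMG0 : (0:ℝ) ≤ MG := le_trans zero_le_one hMG1
  set Φ : ℂ → ℂ := fun z =>
    Complex.Gamma (1/4 - z/2) * (Complex.Gamma (1/4 + z/2))⁻¹ *
      Complex.exp ((z/2) * Complex.log (4 - z^2)) with hΦ
  -- differentiability on the closed strip
  have hdiffAt : ∀ z : ℂ, -1 ≤ z.re → z.re ≤ 0 → DifferentiableAt ℂ Φ z := by
    intro z hz1 hz2
    have hg1 : DifferentiableAt ℂ (fun t : ℂ => Complex.Gamma (1/4 - t/2)) z := by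
      have hin : DifferentiableAt ℂ (fun t : ℂ => 1/4 - t/2) z :=
        (differentiableAt_const _).sub (differentiableAt_id.div_const 2)
      refine DifferentiableAt.comp z (Complex.differentiableAt_Gamma _ ?_) hin
      intro m hm
      have h := congrArg Complex.re hm
      rw [re14m] at h
      simp only [Complex.neg_re, Complex.natCast_re] at h
      have hm0 : (0:ℝ) ≤ (m:ℝ) := Nat.cast_nonneg m
      linarith
    have hg2 : DifferentiableAt ℂ (fun t : ℂ => (Complex.Gamma (1/4 + t/2))⁻¹) z := by
      have hin : DifferentiableAt ℂ (fun t : ℂ => 1/4 + t/2) z :=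
        (differentiableAt_const _).add (differentiableAt_id.div_const 2)
      exact (Complex.differentiable_one_div_Gamma.comp
        ((differentiable_const _).add (differentiable_id.div_const 2))).differentiableAt
    have hg3 : DifferentiableAt ℂ
        (fun t : ℂ => Complex.exp ((t/2) * Complex.log (4 - t^2))) z := by
      have hsq : DifferentiableAt ℂ (fun t : ℂ => (4:ℂ) - t^2) z :=
        (differentiableAt_const _).sub (differentiableAt_pow 2)
      have hslit : (4 - z^2) ∈ Complex.slitPlane := by
        rw [Complex.mem_slitPlane_iff]
        left
        exact re4sq_pos (by rw [abs_le]; constructor <;> linarith)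
      exact ((differentiableAt_id.div_const 2).mul (hsq.clog hslit)).cexp
    exact (hg1.mul hg2).mul hg3
  have hd : DiffContOnCl ℂ Φ (re ⁻¹' Ioo (-1:ℝ) 0) := by
    constructor
    · intro z hz
      exact (hdiffAt z hz.1.le hz.2.le).differentiableWithinAt
    · have hsub : closure (re ⁻¹' Ioo (-1:ℝ) 0) ⊆ re ⁻¹' Icc (-1:ℝ) 0 := by
        have h := Continuous.closure_preimage_subset Complex.continuous_re (Ioo (-1:ℝ) 0)
        rwa [closure_Ioo (by norm_num : (-1:ℝ) ≠ 0)] at h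
      intro z hz
      exact ((hdiffAt z (hsub hz).1 (hsub hz).2).continuousAt).continuousWithinAt
  -- boundary x = 0
  have hbdR : ∀ z : ℂ, z.re = 0 → ‖Φ z‖ ≤ 4 * Real.exp 4 := by
    intro z hz
    have hb : (1/4 + z/2 : ℂ) = (starRingEnd ℂ) (1/4 - z/2) := by
      apply Complex.ext
      · rw [re14p, Complex.conj_re, re14m, hz]; norm_num
      · rw [im14p, Complex.conj_im, im14m]; ring
    have hΓa : Complex.Gamma (1/4 - z/2) ≠ 0 :=
      Complex.Gamma_ne_zero_of_re_pos (by rw [re14m, hz]; norm_num)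
    have hq : ‖Complex.Gamma (1/4 - z/2) * (Complex.Gamma (1/4 + z/2))⁻¹‖ = 1 := by
      rw [hb, Complex.Gamma_conj, norm_mul, norm_inv,
        Complex.norm_conj, mul_inv_cancel₀]
      exact norm_ne_zero_iff.2 hΓa
    have hexp : ‖Complex.exp ((z/2) * Complex.log (4 - z^2))‖ ≤ 4 * Real.exp 4 := by
      have hb2 := expfac_bound (s := z) (w := z/2) (by rw [hz]; norm_num)
        (by rw [Complex.div_ofNat_re, hz, abs_le]; norm_num)
        (by rw [Complex.div_ofNat_im, abs_div, _root_.abs_two]; linarith [abs_nonneg z.im])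
      rw [Complex.div_ofNat_re, hz] at hb2
      norm_num [Real.rpow_zero] at hb2
      exact hb2
    have : ‖Φ z‖ = ‖Complex.Gamma (1/4 - z/2) * (Complex.Gamma (1/4 + z/2))⁻¹‖ *
        ‖Complex.exp ((z/2) * Complex.log (4 - z^2))‖ := by
      rw [hΦ]; exact norm_mul _ _
    rw [this, hq, one_mul]
    exact hexp
  -- boundary x = -1
  have hbdL : ∀ z : ℂ, z.re = -1 → ‖Φ z‖ ≤ 4 * Real.exp 4 := by
    intro z hz
    have hb0 : (1/4 + z/2 : ℂ) ≠ 0 := by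
      intro h
      have h' := congrArg Complex.re h
      rw [re14p, hz] at h'
      norm_num at h'
    have hΓa : Complex.Gamma (1/4 - z/2) ≠ 0 :=
      Complex.Gamma_ne_zero_of_re_pos (by rw [re14m, hz]; norm_num)
    have hconj : (1/4 + z/2) + 1 = (starRingEnd ℂ) (1/4 - z/2) := by
      apply Complex.ext
      · rw [Complex.add_re, re14p, Complex.one_re, Complex.conj_re, re14m, hz]; norm_num
      · rw [Complex.add_im, im14p, Complex.one_im, Complex.conj_im, im14m]; ring
    have heq : (starRingEnd ℂ) (Complex.Gamma (1/4 - z/2)) =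
        (1/4 + z/2) * Complex.Gamma (1/4 + z/2) := by
      rw [← Complex.Gamma_conj, ← hconj, Complex.Gamma_add_one _ hb0]
    have hΓb : Complex.Gamma (1/4 + z/2) ≠ 0 := by
      intro h
      rw [h, mul_zero] at heq
      exact hΓa (by simpa using congrArg (starRingEnd ℂ) heq)
    have hnΓa : ‖Complex.Gamma (1/4 - z/2)‖ =
        ‖(1/4 + z/2 : ℂ)‖ * ‖Complex.Gamma (1/4 + z/2)‖ := by
      calc ‖Complex.Gamma (1/4 - z/2)‖
          = ‖(starRingEnd ℂ) (Complex.Gamma (1/4 - z/2))‖ := by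
            rw [Complex.norm_conj]
        _ = ‖(1/4 + z/2 : ℂ)‖ * ‖Complex.Gamma (1/4 + z/2)‖ := by rw [heq, norm_mul]
    have hq : ‖Complex.Gamma (1/4 - z/2) * (Complex.Gamma (1/4 + z/2))⁻¹‖ =
        ‖(1/4 + z/2 : ℂ)‖ := by
      rw [norm_mul, norm_inv, hnΓa, mul_assoc, mul_inv_cancel₀ (norm_ne_zero_iff.2 hΓb),
        mul_one]
    have hnb : ‖(1/4 + z/2 : ℂ)‖ ≤ 1 + ‖z‖ := by
      calc ‖(1/4 + z/2 : ℂ)‖ ≤ ‖(1/4 : ℂ)‖ + ‖z/2‖ := norm_add_le _ _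
        _ = 1/4 + ‖z‖/2 := by
            rw [norm_div]
            norm_num
        _ ≤ 1 + ‖z‖ := by linarith [norm_nonneg z]
    have hexp : ‖Complex.exp ((z/2) * Complex.log (4 - z^2))‖ ≤
        4 * Real.exp 4 * (1 + ‖z‖)⁻¹ := by
      have hb2 := expfac_bound (s := z) (w := z/2) (by rw [hz]; norm_num)
        (by rw [Complex.div_ofNat_re, hz, abs_le]; norm_num)
        (by rw [Complex.div_ofNat_im, abs_div, _root_.abs_two]; linarith [abs_nonneg z.im])
      rw [Complex.div_ofNat_re, hz] at hb2
      have he : 2 * ((-1:ℝ)/2) = -1 := by norm_num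
      rw [he, Real.rpow_neg_one] at hb2
      exact hb2
    have hφ : ‖Φ z‖ = ‖Complex.Gamma (1/4 - z/2) * (Complex.Gamma (1/4 + z/2))⁻¹‖ *
        ‖Complex.exp ((z/2) * Complex.log (4 - z^2))‖ := by
      rw [hΦ]; exact norm_mul _ _
    rw [hφ, hq]
    have h1n : (0:ℝ) < 1 + ‖z‖ := by positivity
    calc ‖(1/4 + z/2 : ℂ)‖ * ‖Complex.exp ((z/2) * Complex.log (4 - z^2))‖
        ≤ (1 + ‖z‖) * (4 * Real.exp 4 * (1 + ‖z‖)⁻¹) :=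
          mul_le_mul hnb hexp (norm_nonneg _) (by positivity)
      _ = 4 * Real.exp 4 := by field_simp
  -- growth
  have hgrow : ∃ c < π / ((0:ℝ) - (-1)), ∃ B, Φ =O[comap (_root_.abs ∘ Complex.im) atTop ⊓
      𝓟 (re ⁻¹' Ioo (-1:ℝ) 0)] fun z => Real.exp (B * Real.exp (c * |z.im|)) := by
    refine ⟨2, by norm_num; linarith [Real.pi_gt_three], MG^2 * (4*Real.exp 4) + 4, ?_⟩
    set B := MG^2 * (4*Real.exp 4) + 4 with hB
    have hBpos : (0:ℝ) < B := by positivity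
    have hB1 : (1:ℝ) ≤ B := by nlinarith [Real.exp_pos (4:ℝ), sq_nonneg MG]
    apply Asymptotics.IsBigO.of_bound B
    rw [Filter.eventually_inf_principal]
    apply Filter.Eventually.of_forall
    intro z hz
    simp only [Set.mem_preimage, Set.mem_Ioo] at hz
    have hΓa : ‖Complex.Gamma (1/4 - z/2)‖ ≤ MG := by
      have hre : 0 < (1/4 - z/2 : ℂ).re := by rw [re14m]; linarith [hz.2]
      refine (norm_Gamma_le hre).trans (hMG _ ?_)
      rw [re14m]
      constructor
      · linarith [hz.2]
      · linarith [hz.1]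
    have hΓbinv : ‖(Complex.Gamma (1/4 + z/2))⁻¹‖ ≤ MG * Real.exp (π * (|z.im|/2)) := by
      have h := norm_inv_Gamma_le hMG (z := 1/4 + z/2)
        (by rw [re14p]; linarith [hz.1]) (by rw [re14p]; linarith [hz.2])
      have habs2 : |z.im/2| = |z.im|/2 := by rw [abs_div, _root_.abs_two]
      rw [im14p, habs2] at h
      exact h
    have hexp : ‖Complex.exp ((z/2) * Complex.log (4 - z^2))‖ ≤ 4 * Real.exp 4 := by
      have hb2 := expfac_bound (s := z) (w := z/2)
        (abs_le.2 ⟨by linarith [hz.1], by linarith [hz.2]⟩)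
        (by rw [Complex.div_ofNat_re, abs_le]; constructor <;> linarith [hz.1, hz.2])
        (by rw [Complex.div_ofNat_im, abs_div, _root_.abs_two]; linarith [abs_nonneg z.im])
      rw [Complex.div_ofNat_re] at hb2
      have hle1 : (1+‖z‖) ^ (2*(z.re/2)) ≤ 1 :=
        Real.rpow_le_one_of_one_le_of_nonpos (by linarith [norm_nonneg z]) (by linarith [hz.2])
      calc ‖Complex.exp ((z/2) * Complex.log (4 - z^2))‖
          ≤ 4*Real.exp 4 * ((1+‖z‖) ^ (2*(z.re/2))) := hb2
        _ ≤ 4*Real.exp 4 * 1 := by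
            apply mul_le_mul_of_nonneg_left hle1 (by positivity)
        _ = 4*Real.exp 4 := mul_one _
    have hnorm : ‖Φ z‖ ≤ MG * (MG * Real.exp (π * (|z.im|/2))) * (4*Real.exp 4) := by
      have hφ : ‖Φ z‖ = ‖Complex.Gamma (1/4 - z/2)‖ * ‖(Complex.Gamma (1/4 + z/2))⁻¹‖ *
          ‖Complex.exp ((z/2) * Complex.log (4 - z^2))‖ := by
        rw [hΦ, norm_mul, norm_mul]
      rw [hφ]
      apply mul_le_mul (mul_le_mul hΓa hΓbinv (norm_nonneg _) hMG0) hexp (norm_nonneg _)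
        (by positivity)
    have hexpchain : Real.exp (π * (|z.im|/2)) ≤ Real.exp (B * Real.exp (2*|z.im|)) := by
      apply Real.exp_le_exp.2
      have ha1 : π * (|z.im|/2) ≤ 2*|z.im| := by
        nlinarith [Real.pi_le_four, abs_nonneg z.im]
      have ha2 : 2*|z.im| ≤ Real.exp (2*|z.im|) := by
        linarith [Real.add_one_le_exp (2*|z.im|)]
      have ha3 : Real.exp (2*|z.im|) ≤ B * Real.exp (2*|z.im|) :=
        le_mul_of_one_le_left (Real.exp_nonneg _) hB1
      exact ha1.trans (ha2.trans ha3)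
    have hrhs : ‖Real.exp (B * Real.exp (2*|z.im|))‖ = Real.exp (B * Real.exp (2*|z.im|)) :=
      Real.norm_of_nonneg (Real.exp_nonneg _)
    rw [hrhs]
    calc ‖Φ z‖ ≤ MG * (MG * Real.exp (π * (|z.im|/2))) * (4*Real.exp 4) := hnorm
      _ = (MG^2 * (4*Real.exp 4)) * Real.exp (π * (|z.im|/2)) := by ring
      _ ≤ B * Real.exp (B * Real.exp (2*|z.im|)) := by
          apply mul_le_mul _ hexpchain (Real.exp_nonneg _) hBpos.le
          nlinarith [Real.exp_pos (4:ℝ), sq_nonneg MG]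
  -- apply Phragmen-Lindelof
  have key : ‖Φ s‖ ≤ 4 * Real.exp 4 :=
    PhragmenLindelof.vertical_strip hd hgrow hbdL hbdR h1 h2
  -- recover the original function
  have hexp2 : ‖Complex.exp (-((s/2) * Complex.log (4 - s^2)))‖ ≤
      4 * Real.exp 4 * (1+‖s‖) ^ (-s.re) := by
    have hb2 := expfac_bound (s := s) (w := -(s/2))
      (abs_le.2 ⟨by linarith, by linarith⟩)
      (by rw [Complex.neg_re, Complex.div_ofNat_re, abs_le]; constructor <;> linarith)
      (by rw [Complex.neg_im, Complex.div_ofNat_im, abs_neg, abs_div, _root_.abs_two]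
          linarith [abs_nonneg s.im])
    rw [Complex.neg_re, Complex.div_ofNat_re] at hb2
    have he : 2 * (-(s.re/2)) = -s.re := by ring
    rw [he] at hb2
    have hee : -((s/2) * Complex.log (4 - s^2)) = (-(s/2)) * Complex.log (4 - s^2) := by ring
    rw [hee]
    exact hb2
  have hfe : Complex.Gamma (1/4 - s/2) * (Complex.Gamma (1/4 + s/2))⁻¹ =
      Φ s * Complex.exp (-((s/2) * Complex.log (4 - s^2))) := by
    rw [hΦ]
    simp only
    rw [mul_assoc, ← Complex.exp_add, add_neg_cancel, Complex.exp_zero, mul_one]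
  rw [hfe, norm_mul]
  calc ‖Φ s‖ * ‖Complex.exp (-((s/2) * Complex.log (4 - s^2)))‖
      ≤ (4 * Real.exp 4) * (4 * Real.exp 4 * (1+‖s‖) ^ (-s.re)) :=
        mul_le_mul key hexp2 (norm_nonneg _) (by positivity)
    _ = (16 * Real.exp 8) * (1+‖s‖) ^ (-s.re) := by
        rw [show (8:ℝ) = 4 + 4 by norm_num, Real.exp_add]; ring


lemma stripB {s : ℂ} (h1 : 0 ≤ s.re) (h2 : s.re ≤ 1/3) :
    ‖Complex.Gamma (1/4 - s/2) * (Complex.Gamma (1/4 + s/2))⁻¹‖ ≤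
      (384 * Real.exp 8) * (1 + ‖s‖) ^ (-s.re) := by
  obtain ⟨MG, hMG1, hMG⟩ := MG_exists
  have hMG0 : (0:ℝ) ≤ MG := le_trans zero_le_one hMG1
  set Ψ : ℂ → ℂ := fun z =>
    Complex.Gamma (5/4 - z/2) * (Complex.Gamma (1/4 + z/2))⁻¹ *
      Complex.exp (((z-1)/2) * Complex.log (4 - z^2)) with hΨ
  have hsplit : ∀ z : ℂ, (1/4 - z/2 : ℂ) ≠ 0 →
      Complex.Gamma (5/4 - z/2) = (1/4 - z/2) * Complex.Gamma (1/4 - z/2) := by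
    intro z hz
    have : (5/4 - z/2 : ℂ) = (1/4 - z/2) + 1 := by ring
    rw [this, Complex.Gamma_add_one _ hz]
  -- differentiability
  have hdiffAt : ∀ z : ℂ, 0 ≤ z.re → z.re ≤ 1 → DifferentiableAt ℂ Ψ z := by
    intro z hz1 hz2
    have hg1 : DifferentiableAt ℂ (fun t : ℂ => Complex.Gamma (5/4 - t/2)) z := by
      have hin : DifferentiableAt ℂ (fun t : ℂ => 5/4 - t/2) z :=
        (differentiableAt_const _).sub (differentiableAt_id.div_const 2)
      refine DifferentiableAt.comp z (Complex.differentiableAt_Gamma _ ?_) hin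
      intro m hm
      have h := congrArg Complex.re hm
      rw [re54] at h
      simp only [Complex.neg_re, Complex.natCast_re] at h
      have hm0 : (0:ℝ) ≤ (m:ℝ) := Nat.cast_nonneg m
      linarith
    have hg2 : DifferentiableAt ℂ (fun t : ℂ => (Complex.Gamma (1/4 + t/2))⁻¹) z :=
      (Complex.differentiable_one_div_Gamma.comp
        ((differentiable_const _).add (differentiable_id.div_const 2))).differentiableAt
    have hg3 : DifferentiableAt ℂ
        (fun t : ℂ => Complex.exp (((t-1)/2) * Complex.log (4 - t^2))) z := by
      have hsq : DifferentiableAt ℂ (fun t : ℂ => (4:ℂ) - t^2) z :=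
        (differentiableAt_const _).sub (differentiableAt_pow 2)
      have hslit : (4 - z^2) ∈ Complex.slitPlane := by
        rw [Complex.mem_slitPlane_iff]
        left
        exact re4sq_pos (by rw [abs_le]; constructor <;> linarith)
      exact (((differentiableAt_id.sub (differentiableAt_const 1)).div_const 2).mul
        (hsq.clog hslit)).cexp
    exact (hg1.mul hg2).mul hg3
  have hd : DiffContOnCl ℂ Ψ (re ⁻¹' Ioo (0:ℝ) 1) := by
    constructor
    · intro z hz
      exact (hdiffAt z hz.1.le hz.2.le).differentiableWithinAt
    · have hsub : closure (re ⁻¹' Ioo (0:ℝ) 1) ⊆ re ⁻¹' Icc (0:ℝ) 1 := by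
        have h := Continuous.closure_preimage_subset Complex.continuous_re (Ioo (0:ℝ) 1)
        rwa [closure_Ioo (by norm_num : (0:ℝ) ≠ 1)] at h
      intro z hz
      exact ((hdiffAt z (hsub hz).1 (hsub hz).2).continuousAt).continuousWithinAt
  -- boundary x = 0
  have hbdL : ∀ z : ℂ, z.re = 0 → ‖Ψ z‖ ≤ 4 * Real.exp 4 := by
    intro z hz
    have ha0 : (1/4 - z/2 : ℂ) ≠ 0 := by
      intro h
      have h' := congrArg Complex.re h
      rw [re14m, hz] at h'
      norm_num at h'
    have hb : (1/4 + z/2 : ℂ) = (starRingEnd ℂ) (1/4 - z/2) := by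
      apply Complex.ext
      · rw [re14p, Complex.conj_re, re14m, hz]; norm_num
      · rw [im14p, Complex.conj_im, im14m]; ring
    have hΓa : Complex.Gamma (1/4 - z/2) ≠ 0 :=
      Complex.Gamma_ne_zero_of_re_pos (by rw [re14m, hz]; norm_num)
    have hq1 : ‖Complex.Gamma (1/4 - z/2) * (Complex.Gamma (1/4 + z/2))⁻¹‖ = 1 := by
      rw [hb, Complex.Gamma_conj, norm_mul, norm_inv,
        Complex.norm_conj, mul_inv_cancel₀]
      exact norm_ne_zero_iff.2 hΓa
    have hq : ‖Complex.Gamma (5/4 - z/2) * (Complex.Gamma (1/4 + z/2))⁻¹‖ =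
        ‖(1/4 - z/2 : ℂ)‖ := by
      rw [hsplit z ha0, mul_assoc, norm_mul, hq1, mul_one]
    have hnb : ‖(1/4 - z/2 : ℂ)‖ ≤ 1 + ‖z‖ := by
      calc ‖(1/4 - z/2 : ℂ)‖ ≤ ‖(1/4 : ℂ)‖ + ‖z/2‖ := norm_sub_le _ _
        _ = 1/4 + ‖z‖/2 := by rw [norm_div]; norm_num
        _ ≤ 1 + ‖z‖ := by linarith [norm_nonneg z]
    have hexp : ‖Complex.exp (((z-1)/2) * Complex.log (4 - z^2))‖ ≤
        4 * Real.exp 4 * (1 + ‖z‖)⁻¹ := by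
      have hb2 := expfac_bound (s := z) (w := (z-1)/2) (by rw [hz]; norm_num)
        (by rw [wre, hz, abs_le]; norm_num)
        (by rw [wim, abs_div, _root_.abs_two]; linarith [abs_nonneg z.im])
      rw [wre, hz] at hb2
      have he : 2 * (((0:ℝ)-1)/2) = -1 := by norm_num
      rw [he, Real.rpow_neg_one] at hb2
      exact hb2
    have hφ : ‖Ψ z‖ = ‖Complex.Gamma (5/4 - z/2) * (Complex.Gamma (1/4 + z/2))⁻¹‖ *
        ‖Complex.exp (((z-1)/2) * Complex.log (4 - z^2))‖ := by
      rw [hΨ]; exact norm_mul _ _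
    rw [hφ, hq]
    have h1n : (0:ℝ) < 1 + ‖z‖ := by positivity
    calc ‖(1/4 - z/2 : ℂ)‖ * ‖Complex.exp (((z-1)/2) * Complex.log (4 - z^2))‖
        ≤ (1 + ‖z‖) * (4 * Real.exp 4 * (1 + ‖z‖)⁻¹) :=
          mul_le_mul hnb hexp (norm_nonneg _) (by positivity)
      _ = 4 * Real.exp 4 := by field_simp
  -- boundary x = 1
  have hbdR : ∀ z : ℂ, z.re = 1 → ‖Ψ z‖ ≤ 4 * Real.exp 4 := by
    intro z hz
    have hb : (1/4 + z/2 : ℂ) = (starRingEnd ℂ) (5/4 - z/2) := by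
      apply Complex.ext
      · rw [re14p, Complex.conj_re, re54, hz]; norm_num
      · rw [im14p, Complex.conj_im, im54]; ring
    have hΓa : Complex.Gamma (5/4 - z/2) ≠ 0 :=
      Complex.Gamma_ne_zero_of_re_pos (by rw [re54, hz]; norm_num)
    have hq : ‖Complex.Gamma (5/4 - z/2) * (Complex.Gamma (1/4 + z/2))⁻¹‖ = 1 := by
      rw [hb, Complex.Gamma_conj, norm_mul, norm_inv,
        Complex.norm_conj, mul_inv_cancel₀]
      exact norm_ne_zero_iff.2 hΓa
    have hexp : ‖Complex.exp (((z-1)/2) * Complex.log (4 - z^2))‖ ≤ 4 * Real.exp 4 := by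
      have hb2 := expfac_bound (s := z) (w := (z-1)/2) (by rw [hz]; norm_num)
        (by rw [wre, hz, abs_le]; norm_num)
        (by rw [wim, abs_div, _root_.abs_two]; linarith [abs_nonneg z.im])
      rw [wre, hz] at hb2
      norm_num [Real.rpow_zero] at hb2
      exact hb2
    have hφ : ‖Ψ z‖ = ‖Complex.Gamma (5/4 - z/2) * (Complex.Gamma (1/4 + z/2))⁻¹‖ *
        ‖Complex.exp (((z-1)/2) * Complex.log (4 - z^2))‖ := by
      rw [hΨ]; exact norm_mul _ _
    rw [hφ, hq, one_mul]
    exact hexp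
  -- growth
  have hgrow : ∃ c < π / ((1:ℝ) - 0), ∃ B, Ψ =O[comap (_root_.abs ∘ Complex.im) atTop ⊓
      𝓟 (re ⁻¹' Ioo (0:ℝ) 1)] fun z => Real.exp (B * Real.exp (c * |z.im|)) := by
    refine ⟨2, by norm_num; linarith [Real.pi_gt_three], MG^2 * (4*Real.exp 4) + 4, ?_⟩
    set B := MG^2 * (4*Real.exp 4) + 4 with hB
    have hBpos : (0:ℝ) < B := by positivity
    have hB1 : (1:ℝ) ≤ B := by nlinarith [Real.exp_pos (4:ℝ), sq_nonneg MG]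
    apply Asymptotics.IsBigO.of_bound B
    rw [Filter.eventually_inf_principal]
    apply Filter.Eventually.of_forall
    intro z hz
    simp only [Set.mem_preimage, Set.mem_Ioo] at hz
    have hΓa : ‖Complex.Gamma (5/4 - z/2)‖ ≤ MG := by
      have hre : 0 < (5/4 - z/2 : ℂ).re := by rw [re54]; linarith [hz.2]
      refine (norm_Gamma_le hre).trans (hMG _ ?_)
      rw [re54]
      constructor
      · linarith [hz.2]
      · linarith [hz.1]
    have hΓbinv : ‖(Complex.Gamma (1/4 + z/2))⁻¹‖ ≤ MG * Real.exp (π * (|z.im|/2)) := by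
      have h := norm_inv_Gamma_le hMG (z := 1/4 + z/2)
        (by rw [re14p]; linarith [hz.1]) (by rw [re14p]; linarith [hz.2])
      have habs2 : |z.im/2| = |z.im|/2 := by rw [abs_div, _root_.abs_two]
      rw [im14p, habs2] at h
      exact h
    have hexp : ‖Complex.exp (((z-1)/2) * Complex.log (4 - z^2))‖ ≤ 4 * Real.exp 4 := by
      have hb2 := expfac_bound (s := z) (w := (z-1)/2)
        (abs_le.2 ⟨by linarith [hz.1], by linarith [hz.2]⟩)
        (by rw [wre, abs_le]; constructor <;> linarith [hz.1, hz.2])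
        (by rw [wim, abs_div, _root_.abs_two]; linarith [abs_nonneg z.im])
      rw [wre] at hb2
      have hle1 : (1+‖z‖) ^ (2*((z.re-1)/2)) ≤ 1 :=
        Real.rpow_le_one_of_one_le_of_nonpos (by linarith [norm_nonneg z]) (by linarith [hz.2])
      calc ‖Complex.exp (((z-1)/2) * Complex.log (4 - z^2))‖
          ≤ 4*Real.exp 4 * ((1+‖z‖) ^ (2*((z.re-1)/2))) := hb2
        _ ≤ 4*Real.exp 4 * 1 := by
            apply mul_le_mul_of_nonneg_left hle1 (by positivity)
        _ = 4*Real.exp 4 := mul_one _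
    have hnorm : ‖Ψ z‖ ≤ MG * (MG * Real.exp (π * (|z.im|/2))) * (4*Real.exp 4) := by
      have hφ : ‖Ψ z‖ = ‖Complex.Gamma (5/4 - z/2)‖ * ‖(Complex.Gamma (1/4 + z/2))⁻¹‖ *
          ‖Complex.exp (((z-1)/2) * Complex.log (4 - z^2))‖ := by
        rw [hΨ, norm_mul, norm_mul]
      rw [hφ]
      apply mul_le_mul (mul_le_mul hΓa hΓbinv (norm_nonneg _) hMG0) hexp (norm_nonneg _)
        (by positivity)
    have hexpchain : Real.exp (π * (|z.im|/2)) ≤ Real.exp (B * Real.exp (2*|z.im|)) := by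
      apply Real.exp_le_exp.2
      have ha1 : π * (|z.im|/2) ≤ 2*|z.im| := by
        nlinarith [Real.pi_le_four, abs_nonneg z.im]
      have ha2 : 2*|z.im| ≤ Real.exp (2*|z.im|) := by
        linarith [Real.add_one_le_exp (2*|z.im|)]
      have ha3 : Real.exp (2*|z.im|) ≤ B * Real.exp (2*|z.im|) :=
        le_mul_of_one_le_left (Real.exp_nonneg _) hB1
      exact ha1.trans (ha2.trans ha3)
    have hrhs : ‖Real.exp (B * Real.exp (2*|z.im|))‖ = Real.exp (B * Real.exp (2*|z.im|)) :=
      Real.norm_of_nonneg (Real.exp_nonneg _)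
    rw [hrhs]
    calc ‖Ψ z‖ ≤ MG * (MG * Real.exp (π * (|z.im|/2))) * (4*Real.exp 4) := hnorm
      _ = (MG^2 * (4*Real.exp 4)) * Real.exp (π * (|z.im|/2)) := by ring
      _ ≤ B * Real.exp (B * Real.exp (2*|z.im|)) := by
          apply mul_le_mul _ hexpchain (Real.exp_nonneg _) hBpos.le
          nlinarith [Real.exp_pos (4:ℝ), sq_nonneg MG]
  -- apply Phragmen-Lindelof
  have key : ‖Ψ s‖ ≤ 4 * Real.exp 4 :=
    PhragmenLindelof.vertical_strip hd hgrow hbdL hbdR h1 (by linarith)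
  -- recover
  have hpos : (0:ℝ) < 1 + ‖s‖ := by positivity
  have hexp2 : ‖Complex.exp (-(((s-1)/2) * Complex.log (4 - s^2)))‖ ≤
      4 * Real.exp 4 * (1+‖s‖) ^ (1-s.re) := by
    have hb2 := expfac_bound (s := s) (w := -((s-1)/2))
      (abs_le.2 ⟨by linarith, by linarith⟩)
      (by rw [Complex.neg_re, wre, abs_le]; constructor <;> linarith)
      (by rw [Complex.neg_im, wim, abs_neg, abs_div, _root_.abs_two]
          linarith [abs_nonneg s.im])
    rw [Complex.neg_re, wre] at hb2
    have he : 2 * (-((s.re-1)/2)) = 1 - s.re := by ring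
    rw [he] at hb2
    have hee : -(((s-1)/2) * Complex.log (4 - s^2)) = (-((s-1)/2)) * Complex.log (4 - s^2) := by
      ring
    rw [hee]
    exact hb2
  have hG : ‖Complex.Gamma (5/4 - s/2) * (Complex.Gamma (1/4 + s/2))⁻¹‖ ≤
      (16 * Real.exp 8) * (1+‖s‖) ^ (1-s.re) := by
    have hfe : Complex.Gamma (5/4 - s/2) * (Complex.Gamma (1/4 + s/2))⁻¹ =
        Ψ s * Complex.exp (-(((s-1)/2) * Complex.log (4 - s^2))) := by
      rw [hΨ]
      simp only
      rw [mul_assoc, ← Complex.exp_add, add_neg_cancel, Complex.exp_zero, mul_one]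
    rw [hfe, norm_mul]
    calc ‖Ψ s‖ * ‖Complex.exp (-(((s-1)/2) * Complex.log (4 - s^2)))‖
        ≤ (4 * Real.exp 4) * (4 * Real.exp 4 * (1+‖s‖) ^ (1-s.re)) :=
          mul_le_mul key hexp2 (norm_nonneg _) (by positivity)
      _ = (16 * Real.exp 8) * (1+‖s‖) ^ (1-s.re) := by
          rw [show (8:ℝ) = 4 + 4 by norm_num, Real.exp_add]; ring
  -- divide by a
  have ha0 : (1/4 - s/2 : ℂ) ≠ 0 := by
    intro h
    have h' := congrArg Complex.re h
    rw [re14m] at h'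
    simp only [Complex.zero_re] at h'
    linarith
  have hna : (0:ℝ) < ‖(1/4 - s/2 : ℂ)‖ := norm_pos_iff.2 ha0
  have h24 : 1 + ‖s‖ ≤ 24 * ‖(1/4 - s/2 : ℂ)‖ := by
    have h12 : 1/12 ≤ ‖(1/4 - s/2 : ℂ)‖ := by
      have hre : (1/12:ℝ) ≤ (1/4 - s/2 : ℂ).re := by rw [re14m]; linarith
      calc (1/12:ℝ) ≤ (1/4 - s/2 : ℂ).re := hre
        _ ≤ ‖(1/4 - s/2 : ℂ)‖ := Complex.re_le_norm _
        _ = ‖(1/4 - s/2 : ℂ)‖ := rfl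
    rcases le_or_gt ‖s‖ 1 with h | h
    · linarith
    · have hlow : ‖s‖/2 - 1/4 ≤ ‖(1/4 - s/2 : ℂ)‖ := by
        have := norm_sub_norm_le (s/2) ((1:ℂ)/4)
        rw [norm_sub_rev] at this
        have h4 : ‖(1/4:ℂ)‖ = 1/4 := by norm_num
        have h5 : ‖s/2‖ = ‖s‖/2 := by rw [norm_div]; norm_num
        calc ‖s‖/2 - 1/4 = ‖s/2‖ - ‖(1/4:ℂ)‖ := by rw [h4, h5]
          _ ≤ ‖(1/4:ℂ) - s/2‖ := by rw [norm_sub_rev]; exact norm_sub_norm_le _ _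
          _ = ‖(1/4 - s/2 : ℂ)‖ := by norm_num
      linarith
  have hfe2 : Complex.Gamma (1/4 - s/2) * (Complex.Gamma (1/4 + s/2))⁻¹ =
      (1/4 - s/2 : ℂ)⁻¹ * (Complex.Gamma (5/4 - s/2) * (Complex.Gamma (1/4 + s/2))⁻¹) := by
    rw [hsplit s ha0, ← mul_assoc, ← mul_assoc, inv_mul_cancel₀ ha0, one_mul]
  rw [hfe2, norm_mul, norm_inv]
  have hinv : ‖(1/4 - s/2 : ℂ)‖⁻¹ ≤ 24/(1+‖s‖) := by
    rw [le_div_iff₀ hpos]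
    calc ‖(1/4 - s/2 : ℂ)‖⁻¹ * (1+‖s‖) ≤ ‖(1/4 - s/2 : ℂ)‖⁻¹ * (24 * ‖(1/4 - s/2 : ℂ)‖) :=
          mul_le_mul_of_nonneg_left h24 (inv_nonneg.2 hna.le)
      _ = 24 := by
          rw [mul_comm (24:ℝ), ← mul_assoc, inv_mul_cancel₀ hna.ne', one_mul]
  have hrsplit : (1+‖s‖) ^ (1-s.re) = (1+‖s‖) * (1+‖s‖) ^ (-s.re) := by
    rw [show (1-s.re) = 1 + (-s.re) by ring, Real.rpow_add hpos, Real.rpow_one]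
  calc ‖(1/4 - s/2 : ℂ)‖⁻¹ * ‖Complex.Gamma (5/4 - s/2) * (Complex.Gamma (1/4 + s/2))⁻¹‖
      ≤ (24/(1+‖s‖)) * ((16 * Real.exp 8) * (1+‖s‖) ^ (1-s.re)) :=
        mul_le_mul hinv hG (norm_nonneg _) (by positivity)
    _ = (384 * Real.exp 8) * (1+‖s‖) ^ (-s.re) := by
        rw [hrsplit, div_eq_mul_inv]
        have hcan : (1+‖s‖)⁻¹ * (1+‖s‖) = 1 := inv_mul_cancel₀ hpos.ne'
        calc (24*(1+‖s‖)⁻¹) * ((16 * Real.exp 8) * ((1+‖s‖) * (1+‖s‖) ^ (-s.re)))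
            = (384 * Real.exp 8) * (((1+‖s‖)⁻¹ * (1+‖s‖)) * (1+‖s‖) ^ (-s.re)) := by ring
          _ = (384 * Real.exp 8) * (1+‖s‖) ^ (-s.re) := by rw [hcan, one_mul]


end GQBAux

/-- **Stirling-type bound for a Gamma quotient:** there is an absolute constant `K` with
`|Γ(1/4 - s/2)/Γ(1/4 + s/2)| ≤ K (|s|+1)^{-Re s}` whenever `-1 ≤ Re s ≤ 1/3`. -/
theorem gamma_quotient_bound :
    ∃ K : ℝ, ∀ s : ℂ, -1 ≤ s.re → s.re ≤ 1 / 3 →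
      ‖Complex.Gamma (1 / 4 - s / 2) / Complex.Gamma (1 / 4 + s / 2)‖ ≤
        K * (‖s‖ + 1) ^ (-s.re) := by
  refine ⟨384 * Real.exp 8, fun s h1 h2 => ?_⟩
  rw [div_eq_mul_inv]
  have hcomm : (‖s‖ + 1 : ℝ) = 1 + ‖s‖ := by ring
  rw [hcomm]
  rcases le_or_gt s.re 0 with h | h
  · refine (GQBAux.stripA h1 h).trans ?_
    apply mul_le_mul_of_nonneg_right _ (Real.rpow_nonneg (by positivity) _)
    nlinarith [Real.exp_pos (8:ℝ)]
  · exact GQBAux.stripB h.le h2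

end
end
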